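/- Let X be a Hausdorff topological space in which every locally finite family of pairwise distinct nonempty functionally open sets is finite, and such that for every countable set A ⊆ X there exists a continuous mapping φ : C_p*(A) → C_p(X) with φ(y)|_A = y for every y ∈ C_p*(A). Then X is finite. -/

import Mathlib

open Set Topology

/-- `C_p(X)`: the continuous real-valued functions on `X`, topologized by pointwise
convergence (i.e. as a subspace of `X → ℝ` with the product topology). -/
abbrev Cp (X : Type*) [TopologicalSpace X] : Type _ := {f : X → ℝ // Continuous f}

/-- `C_p*(X)`: the bounded continuous real-valued functions on `X`, topologized by
pointwise convergence. -/
abbrev CpStar (X : Type*) [TopologicalSpace X] : Type _ :=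
  {f : X → ℝ // Continuous f ∧ ∃ M : ℝ, ∀ x, |f x| ≤ M}

/-- A set is functionally open (a cozero set) if it is the cozero set of a
continuous real-valued function. -/
def FunctionallyOpen {X : Type*} [TopologicalSpace X] (U : Set X) : Prop :=
  ∃ f : X → ℝ, Continuous f ∧ U = f ⁻¹' ({0}ᶜ)

/-- A subset `A` is strongly functionally discrete in `X` if there is a family of
functionally open sets `G a ∋ a` (for `a ∈ A`) which is discrete in `X`: every point
of `X` has a neighborhood meeting `G a` for at most one `a ∈ A`. -/
def StronglyFunctionallyDiscrete {X : Type*} [TopologicalSpace X] (A : Set X) : Prop :=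
  ∃ G : A → Set X,
    (∀ a : A, (a : X) ∈ G a) ∧
    (∀ a : A, FunctionallyOpen (G a)) ∧
    (∀ x : X, ∃ V ∈ 𝓝 x, {a : A | (V ∩ G a).Nonempty}.Subsingleton)

private lemma max_ne_zero_iff_pos {t : ℝ} : max t 0 ≠ 0 ↔ 0 < t := by
  constructor
  · intro h
    by_contra hc
    exact h (max_eq_right (not_lt.mp hc))
  · intro h h'
    rw [max_eq_left h.le] at h'
    exact h.ne' h'

private lemma step_lemma {X : Type*} [TopologicalSpace X] [T2Space X]
    (S : Set X) (hS : S.Infinite) :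
    ∃ x ∈ S, ∃ U : Set X, IsOpen U ∧ x ∈ U ∧ (S \ U).Infinite := by
  obtain ⟨x, hx, y, hy, hxy⟩ := hS.nontrivial
  obtain ⟨P, Q, hP, hQ, hxP, hyQ, hPQ⟩ := t2_separation hxy
  by_cases hSP : (S \ P).Infinite
  · exact ⟨x, hx, P, hP, hxP, hSP⟩
  · refine ⟨y, hy, Q, hQ, hyQ, ?_⟩
    have h1 : (S ∩ P).Infinite := by
      have h2 := hS.diff (Set.not_infinite.mp hSP)
      have h3 : S \ (S \ P) = S ∩ P := by
        ext z
        simp only [Set.mem_diff, Set.mem_inter_iff, not_and, not_not]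
        tauto
      rwa [h3] at h2
    exact h1.mono fun z hz => ⟨hz.1, fun hzQ => Set.disjoint_left.mp hPQ hz.2 hzQ⟩

private lemma exists_discrete_seq (X : Type*) [TopologicalSpace X] [T2Space X] [Infinite X] :
    ∃ a : ℕ → X, Function.Injective a ∧
      ∃ U : ℕ → Set X, (∀ n, IsOpen (U n)) ∧ (∀ n, a n ∈ U n) ∧
        ∀ n m, a m ∈ U n → m ≤ n := by
  choose pt hmem Uf hUo hUm hUi using step_lemma (X := X)
  let T : ℕ → {S : Set X // S.Infinite} := fun n =>
    Nat.rec ⟨Set.univ, Set.infinite_univ⟩ (fun _ p => ⟨p.1 \ Uf p.1 p.2, hUi p.1 p.2⟩) n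
  have hTsucc : ∀ n, (T (n + 1)).1 = (T n).1 \ Uf (T n).1 (T n).2 := fun n => rfl
  have hTstep : ∀ n, (T (n + 1)).1 ⊆ (T n).1 := by
    intro n
    rw [hTsucc n]
    exact Set.diff_subset
  have hTmono : ∀ n m, n ≤ m → (T m).1 ⊆ (T n).1 := by
    intro n m hnm
    induction hnm with
    | refl => exact subset_rfl
    | step _ ih => exact (hTstep _).trans ih
  have hnotin : ∀ n m, n < m → pt (T m).1 (T m).2 ∉ Uf (T n).1 (T n).2 := by
    intro n m hnm
    have h1 : pt (T m).1 (T m).2 ∈ (T m).1 := hmem _ _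
    have h3 := hTmono (n + 1) m hnm h1
    rw [hTsucc n] at h3
    exact h3.2
  refine ⟨fun n => pt (T n).1 (T n).2, ?_, fun n => Uf (T n).1 (T n).2,
    fun n => hUo _ _, fun n => hUm _ _, fun n m hm => ?_⟩
  · intro i j hij
    have hij' : pt (T i).1 (T i).2 = pt (T j).1 (T j).2 := hij
    by_contra hne
    rcases Ne.lt_or_gt hne with hlt | hlt
    · exact hnotin i j hlt (by rw [← hij']; exact hUm _ _)
    · exact hnotin j i hlt (by rw [hij']; exact hUm _ _)
  · by_contra hm'
    exact hnotin n m (not_le.mp hm') hm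

/-- If `X` is Hausdorff, every locally finite family of pairwise distinct nonempty
functionally open subsets of `X` is finite, and for every countable `A ⊆ X` there is
a continuous extender `C_p*(A) → C_p(X)`, then `X` is finite. -/
theorem stmt_7 {X : Type*} [TopologicalSpace X] [T2Space X]
    (hlf : ∀ S : Set (Set X), (∀ U ∈ S, U.Nonempty ∧ FunctionallyOpen U) →
      (∀ x : X, ∃ V ∈ 𝓝 x, {U ∈ S | (V ∩ U).Nonempty}.Finite) → S.Finite)
    (h : ∀ A : Set X, A.Countable → ∃ φ : CpStar A → Cp X, Continuous φ ∧
      ∀ y : CpStar A, ∀ a : A, (φ y).1 a = y.1 a) :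
    Finite X := by
  classical
  by_contra hfin
  rw [not_finite_iff_infinite] at hfin
  obtain ⟨a, ha_inj, U, hUopen, hUmem, hUle⟩ := exists_discrete_seq X
  obtain ⟨φ, hφc, hφe⟩ := h (Set.range a) (Set.countable_range a)
  -- the range of `a` is a discrete subspace
  have hdisc : DiscreteTopology (Set.range a) := by
    rw [discreteTopology_iff_isOpen_singleton]
    intro p
    obtain ⟨n, hn⟩ := Set.mem_range.mp p.2
    rw [isOpen_induced_iff]
    refine ⟨U n \ (a '' Set.Iio n),
      IsOpen.sdiff (hUopen n) ((Set.finite_Iio n).image a).isClosed, ?_⟩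
    ext q
    simp only [Set.mem_preimage, Set.mem_diff, Set.mem_singleton_iff]
    constructor
    · rintro ⟨hqU, hqnot⟩
      obtain ⟨m, hm⟩ := Set.mem_range.mp q.2
      have hmn : m ≤ n := hUle n m (by rw [hm]; exact hqU)
      rcases lt_or_eq_of_le hmn with hlt | heq
      · exact absurd ⟨m, hlt, hm⟩ hqnot
      · apply Subtype.ext
        rw [← hm, ← hn, heq]
    · rintro rfl
      constructor
      · rw [← hn]; exact hUmem n
      · rintro ⟨m, hmlt, hmeq⟩
        exact absurd (ha_inj (hmeq.trans hn.symm)) (Nat.ne_of_lt hmlt)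
  -- tail indicator functions
  let yk : ℕ → CpStar (Set.range a) := fun k =>
    ⟨fun p => if ∃ m, (p : X) = a m ∧ k ≤ m then (1 : ℝ) else 0,
      continuous_of_discreteTopology, 1, by
        intro p
        dsimp only
        split <;> norm_num⟩
  let y0 : CpStar (Set.range a) := ⟨fun _ => 0, continuous_const, 0, by intro p; simp⟩
  have hval : ∀ k m : ℕ, (yk k).1 ⟨a m, Set.mem_range_self m⟩ = if k ≤ m then 1 else 0 := by
    intro k m
    by_cases hkm : k ≤ m
    · dsimp only [yk]
      rw [if_pos ⟨m, rfl, hkm⟩, if_pos hkm]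
    · dsimp only [yk]
      rw [if_neg, if_neg hkm]
      rintro ⟨m', hm', hk'⟩
      have : m = m' := ha_inj hm'
      exact hkm (this ▸ hk')
  let g : ℕ → Cp X := fun k => φ (yk k)
  let gz : Cp X := φ y0
  have hg : ∀ k m : ℕ, (g k).1 (a m) = if k ≤ m then 1 else 0 := by
    intro k m
    have := hφe (yk k) ⟨a m, Set.mem_range_self m⟩
    rw [this, hval]
  have hgz : ∀ m : ℕ, gz.1 (a m) = 0 := by
    intro m
    exact hφe y0 ⟨a m, Set.mem_range_self m⟩
  -- the nested cozero sets
  let W : ℕ → Set X := fun k =>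
    {x | (∀ j ≤ k, 3 / 4 < (g j).1 x) ∧ gz.1 x < 1 / 4}
  have hWne : ∀ k, (W k).Nonempty := by
    intro k
    refine ⟨a k, fun j hj => ?_, ?_⟩
    · rw [hg j k, if_pos hj]; norm_num
    · rw [hgz k]; norm_num
  have hWfo : ∀ k, FunctionallyOpen (W k) := by
    intro k
    refine ⟨fun x => (∏ j ∈ Finset.range (k + 1), max ((g j).1 x - 3 / 4) 0) *
      max (1 / 4 - gz.1 x) 0, ?_, ?_⟩
    · exact Continuous.mul
        (continuous_finset_prod _ fun j _ => ((g j).2.sub continuous_const).max continuous_const)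
        ((continuous_const.sub gz.2).max continuous_const)
    · ext x
      simp only [Set.mem_preimage, Set.mem_compl_iff, Set.mem_singleton_iff, Set.mem_setOf_eq, W]
      rw [← Ne, mul_ne_zero_iff, Finset.prod_ne_zero_iff]
      constructor
      · rintro ⟨h1, h2⟩
        refine ⟨fun j hj => ?_, ?_⟩
        · rw [max_ne_zero_iff_pos, sub_pos]
          exact h1 j (Nat.lt_succ_iff.mp (Finset.mem_range.mp hj))
        · rw [max_ne_zero_iff_pos, sub_pos]
          exact h2
      · rintro ⟨h1, h2⟩
        refine ⟨fun j hj => ?_, ?_⟩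
        · exact sub_pos.mp (max_ne_zero_iff_pos.mp
            (h1 j (Finset.mem_range.mpr (Nat.lt_succ_iff.mpr hj))))
        · exact sub_pos.mp (max_ne_zero_iff_pos.mp h2)
  have hWanti : ∀ {j k : ℕ}, j ≤ k → W k ⊆ W j := by
    intro j k hjk x hx
    exact ⟨fun i hi => hx.1 i (hi.trans hjk), hx.2⟩
  -- a point in the closure of all the `W k`
  have hx0 : ∃ x₀ : X, ∀ k, x₀ ∈ closure (W k) := by
    by_cases hfin' : (Set.range W).Finite
    · have hfib : ∃ Z ∈ Set.range W, {k | W k = Z}.Infinite := by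
        by_contra hC
        push_neg at hC
        have hsub : (Set.univ : Set ℕ) ⊆ ⋃ Z ∈ Set.range W, {k | W k = Z} := by
          intro k _
          exact Set.mem_biUnion ⟨k, rfl⟩ rfl
        exact Set.infinite_univ
          ((hfin'.biUnion fun Z hZ => hC Z hZ).subset hsub)
      obtain ⟨Z, _, hZ⟩ := hfib
      obtain ⟨k₀, hk₀⟩ := hZ.nonempty
      obtain ⟨x₀, hx₀⟩ := hWne k₀
      refine ⟨x₀, fun j => subset_closure ?_⟩
      obtain ⟨k, hk, hjk⟩ := hZ.exists_gt j
      have h1 : W k₀ = Z := hk₀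
      have h2 : W k = Z := hk
      exact hWanti hjk.le (h2 ▸ h1 ▸ hx₀)
    · have h1 : ∀ U' ∈ Set.range W, U'.Nonempty ∧ FunctionallyOpen U' := by
        rintro _ ⟨k, rfl⟩
        exact ⟨hWne k, hWfo k⟩
      have h2 : ¬ ∀ x : X, ∃ V ∈ 𝓝 x, {U' ∈ Set.range W | (V ∩ U').Nonempty}.Finite :=
        fun hh => hfin' (hlf _ h1 hh)
      push_neg at h2
      obtain ⟨x₀, hx₀⟩ := h2
      refine ⟨x₀, fun j => ?_⟩
      rw [mem_closure_iff]
      intro o ho hxo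
      by_contra hcon
      have hinf2 : ¬ {U' ∈ Set.range W | (o ∩ U').Nonempty}.Finite := hx₀ o (ho.mem_nhds hxo)
      apply hinf2
      apply ((Set.finite_Iio j).image W).subset
      rintro Z ⟨⟨k, rfl⟩, hZne⟩
      rcases lt_or_ge k j with hkj | hjk
      · exact ⟨k, hkj, rfl⟩
      · exact absurd (hZne.mono (Set.inter_subset_inter_right o (hWanti hjk))) hcon
  obtain ⟨x₀, hx₀⟩ := hx0
  have hge : ∀ k, 3 / 4 ≤ (g k).1 x₀ := by
    intro k
    have hcl : closure (W k) ⊆ (g k).1 ⁻¹' (Set.Ici (3 / 4)) :=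
      closure_minimal (fun x hx => le_of_lt (hx.1 k le_rfl)) (isClosed_Ici.preimage (g k).2)
    exact hcl (hx₀ k)
  have hle : gz.1 x₀ ≤ 1 / 4 := by
    have hcl : closure (W 0) ⊆ gz.1 ⁻¹' (Set.Iic (1 / 4)) :=
      closure_minimal (fun x hx => le_of_lt hx.2) (isClosed_Iic.preimage gz.2)
    exact hcl (hx₀ 0)
  -- `yk k` tends to `y0` pointwise, hence `(g k) x₀` tends to `gz x₀`
  have hyt : Filter.Tendsto yk Filter.atTop (𝓝 y0) := by
    rw [Topology.IsEmbedding.subtypeVal.tendsto_nhds_iff]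
    rw [tendsto_pi_nhds]
    intro p
    obtain ⟨m, hm⟩ := Set.mem_range.mp p.2
    apply tendsto_atTop_of_eventually_const (i₀ := m + 1)
    intro k hk
    show (yk k).1 p = y0.1 p
    have hp : p = ⟨a m, Set.mem_range_self m⟩ := Subtype.ext hm.symm
    rw [hp, hval k m, if_neg (by omega)]
  have hcont : Continuous (fun y : CpStar (Set.range a) => (φ y).1 x₀) :=
    ((continuous_apply x₀).comp continuous_subtype_val).comp hφc
  have hlim : Filter.Tendsto (fun k => (g k).1 x₀) Filter.atTop (𝓝 (gz.1 x₀)) :=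
    (hcont.tendsto y0).comp hyt
  have hfinal : 3 / 4 ≤ gz.1 x₀ := ge_of_tendsto' hlim hge
  linarith
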